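/- arXiv:1305.0656 — 2 statements merged into one kernel-verified Lean document; each statement's English description precedes it below -/
import Mathlib

section
/- Constancy of the Wronskian: let z ∈ ℂ and let u, v both be solutions of the interface equation −u'' = z u for μ on an interval [a, b] with a, b ∉ {t_n : n}. Then W(u, v) is constant on [a, b] ∖ {t_n : n}. In particular, if u_N, u_D are the solutions on [a, b] with u_N(a) = 1, u_N'(a) = 0, u_D(a) = 0, u_D'(a) = 1, then W(u_N, u_D)(r) = −1 for all r ∈ [a, b] ∖ {t_n : n}. -/
open Set Filter Topology MeasureTheory

/-- The part of the interval `J` off the atoms `{tₙ}`. -/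
def offAtoms (ts : ℕ → ℝ) (J : Set ℝ) : Set ℝ := J \ Set.range ts

/-- One-sided limits of `u` and its derivative exist at the atom `ts n`, and the
interface conditions `u(tₙ+) = √bₙ · u(tₙ-)`, `u'(tₙ+) = u'(tₙ-)/√bₙ` hold. -/
def InterfaceAt (ts bs : ℕ → ℝ) (S : Set ℝ) (u : ℝ → ℂ) (n : ℕ) : Prop :=
  ∃ uL uR duL duR : ℂ,
    Tendsto u (nhdsWithin (ts n) (S ∩ Iio (ts n))) (nhds uL) ∧
    Tendsto u (nhdsWithin (ts n) (S ∩ Ioi (ts n))) (nhds uR) ∧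
    Tendsto (derivWithin u S) (nhdsWithin (ts n) (S ∩ Iio (ts n))) (nhds duL) ∧
    Tendsto (derivWithin u S) (nhdsWithin (ts n) (S ∩ Ioi (ts n))) (nhds duR) ∧
    uR = (Real.sqrt (bs n) : ℂ) * uL ∧
    duR = duL / (Real.sqrt (bs n) : ℂ)

/-- `u` is a solution of the interface equation `-u'' = z·u` for the atomic measure
with atoms `ts n` and branching numbers `bs n`, on the interval `J`:
`u` is twice continuously differentiable on `J` off the atoms with `-u'' = z·u` there,
and at every atom in the interior of `J` it has one-sided limits satisfying
the interface conditions. -/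
def IsInterfaceSolution (ts bs : ℕ → ℝ) (z : ℂ) (J : Set ℝ) (u : ℝ → ℂ) : Prop :=
  ContDiffOn ℝ 2 u (offAtoms ts J) ∧
  (∀ x ∈ offAtoms ts J,
      -(derivWithin (derivWithin u (offAtoms ts J)) (offAtoms ts J) x) = z * u x) ∧
  (∀ n, ts n ∈ interior J → InterfaceAt ts bs (offAtoms ts J) u n)

/-- The Wronskian `W(f, g)(r) = f'(r)·g(r) - f(r)·g'(r)`, with derivatives taken
within the set `S`. -/
noncomputable def wron (S : Set ℝ) (f g : ℝ → ℂ) (r : ℝ) : ℂ :=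
  derivWithin f S r * g r - f r * derivWithin g S r

/-- The Wronskian `W(f, ḡ)(r)` of `f` and the pointwise complex conjugate of `g`. -/
noncomputable def wronConj (S : Set ℝ) (f g : ℝ → ℂ) (r : ℝ) : ℂ :=
  derivWithin f S r * (starRingEnd ℂ) (g r)
    - f r * (starRingEnd ℂ) (derivWithin g S r)

private lemma ts_growth (ts : ℕ → ℝ) (γ : ℝ) (hgap : ∀ n, γ ≤ ts (n + 1) - ts n) :
    ∀ n : ℕ, ts 0 + n * γ ≤ ts n := by
  intro n
  induction n with
  | zero => simp
  | succ n ih =>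
    have := hgap n
    push_cast
    nlinarith

private lemma atoms_finite (ts : ℕ → ℝ) (γ : ℝ) (hγ : 0 < γ)
    (hgap : ∀ n, γ ≤ ts (n + 1) - ts n) (r : ℝ) : {n : ℕ | ts n < r}.Finite := by
  obtain ⟨N, hN⟩ := exists_nat_gt ((r - ts 0) / γ)
  refine (Set.finite_Iio N).subset ?_
  intro n hn
  simp only [Set.mem_setOf_eq] at hn
  have h1 := ts_growth ts γ hgap n
  have h2 : (n : ℝ) < (r - ts 0) / γ := (lt_div_iff₀ hγ).mpr (by linarith)
  have : (n : ℝ) < N := h2.trans hN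
  exact Set.mem_Iio.mpr (by exact_mod_cast this)

private lemma no_atom_in_gap (ts : ℕ → ℝ) (γ : ℝ) (ht_mono : StrictMono ts)
    (hgap : ∀ n, γ ≤ ts (n + 1) - ts n) (n m : ℕ) :
    ts m ∉ Set.Ioo (ts n) (ts n + γ) := by
  rintro ⟨h1, h2⟩
  have hnm : n < m := ht_mono.lt_iff_lt.mp h1
  have h3 : ts (n + 1) ≤ ts m := ht_mono.monotone hnm
  have := hgap n
  linarith

private lemma offAtoms_uniqueDiffOn (ts : ℕ → ℝ) (γ : ℝ) (hγ : 0 < γ)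
    (hgap : ∀ n, γ ≤ ts (n + 1) - ts n)
    {a b : ℝ} (hab : a < b) : UniqueDiffOn ℝ (offAtoms ts (Set.Icc a b)) := by
  intro x hx
  obtain ⟨hxab, hxa⟩ := hx
  have hF : {n : ℕ | ts n ∈ Set.Ioo (x - 1) (x + 1)}.Finite :=
    (atoms_finite ts γ hγ hgap (x + 1)).subset fun n hn => hn.2
  obtain ⟨ε, hε, hεatom⟩ : ∃ ε : ℝ, 0 < ε ∧ ∀ m, ts m ∉ Set.Ioo (x - ε) (x + ε) := by
    by_cases hne : hF.toFinset.Nonempty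
    · refine ⟨min 1 (hF.toFinset.inf' hne fun n => |ts n - x|), ?_, ?_⟩
      · refine lt_min one_pos ?_
        rw [Finset.lt_inf'_iff]
        intro n hn
        rw [abs_pos, sub_ne_zero]
        intro h
        exact hxa ⟨n, h⟩
      · rintro m ⟨h1, h2⟩
        have hm1 : min 1 (hF.toFinset.inf' hne fun n => |ts n - x|) ≤ 1 := min_le_left _ _
        have hmem : m ∈ hF.toFinset := by
          rw [Set.Finite.mem_toFinset]
          exact ⟨by linarith, by linarith⟩
        have hle : hF.toFinset.inf' hne (fun n => |ts n - x|) ≤ |ts m - x| :=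
          Finset.inf'_le _ hmem
        have habs : |ts m - x| < min 1 (hF.toFinset.inf' hne fun n => |ts n - x|) :=
          abs_lt.mpr ⟨by linarith, by linarith⟩
        have := min_le_right 1 (hF.toFinset.inf' hne fun n => |ts n - x|)
        linarith
    · refine ⟨1, one_pos, fun m hm => hne ⟨m, ?_⟩⟩
      rw [Set.Finite.mem_toFinset]
      exact hm
  have hlox : max a (x - ε / 2) ≤ x := max_le hxab.1 (by linarith)
  have hxhi : x ≤ min b (x + ε / 2) := le_min hxab.2 (by linarith)
  have hsub : Set.Icc (max a (x - ε / 2)) (min b (x + ε / 2)) ⊆ offAtoms ts (Set.Icc a b) := by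
    intro p hp
    refine ⟨⟨le_trans (le_max_left _ _) hp.1, le_trans hp.2 (min_le_left _ _)⟩, ?_⟩
    rintro ⟨m, rfl⟩
    refine hεatom m ⟨?_, ?_⟩
    · have := le_trans (le_max_right a (x - ε / 2)) hp.1; linarith
    · have := le_trans hp.2 (min_le_right b (x + ε / 2)); linarith
  have hlohi : max a (x - ε / 2) < min b (x + ε / 2) := by
    rcases lt_or_eq_of_le hxab.1 with h | h
    · exact lt_of_lt_of_le (max_lt h (by linarith)) hxhi
    · have hxb : x < b := h ▸ hab
      exact lt_of_le_of_lt hlox (lt_min hxb (by linarith))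
  exact (uniqueDiffOn_Icc hlohi x ⟨hlox, hxhi⟩).mono hsub
private lemma wron_const_on_clear (ts bs : ℕ → ℝ) (z : ℂ) (a b : ℝ) (f g : ℝ → ℂ)
    (hf : IsInterfaceSolution ts bs z (Set.Icc a b) f)
    (hg : IsInterfaceSolution ts bs z (Set.Icc a b) g)
    (hUD : UniqueDiffOn ℝ (offAtoms ts (Set.Icc a b)))
    {x y : ℝ} (hxy : x ≤ y) (hsub : Set.Icc x y ⊆ offAtoms ts (Set.Icc a b)) :
    wron (offAtoms ts (Set.Icc a b)) f g y = wron (offAtoms ts (Set.Icc a b)) f g x := by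
  set S := offAtoms ts (Set.Icc a b) with hS
  rcases eq_or_lt_of_le hxy with rfl | hlt
  · rfl
  have hdf : DifferentiableOn ℝ f S := hf.1.differentiableOn two_ne_zero
  have hdg : DifferentiableOn ℝ g S := hg.1.differentiableOn two_ne_zero
  have hdf' : DifferentiableOn ℝ (derivWithin f S) S :=
    (hf.1.derivWithin hUD (by norm_num)).differentiableOn one_ne_zero
  have hdg' : DifferentiableOn ℝ (derivWithin g S) S :=
    (hg.1.derivWithin hUD (by norm_num)).differentiableOn one_ne_zero
  have key : ∀ p ∈ Set.Icc x y, HasDerivWithinAt (wron S f g) 0 (Set.Icc x y) p := by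
    intro p hp
    have hpS := hsub hp
    have h1 : HasDerivWithinAt f (derivWithin f S p) (Set.Icc x y) p :=
      ((hdf p hpS).hasDerivWithinAt).mono hsub
    have h2 : HasDerivWithinAt (derivWithin f S) (derivWithin (derivWithin f S) S p)
        (Set.Icc x y) p := ((hdf' p hpS).hasDerivWithinAt).mono hsub
    have h3 : HasDerivWithinAt g (derivWithin g S p) (Set.Icc x y) p :=
      ((hdg p hpS).hasDerivWithinAt).mono hsub
    have h4 : HasDerivWithinAt (derivWithin g S) (derivWithin (derivWithin g S) S p)
        (Set.Icc x y) p := ((hdg' p hpS).hasDerivWithinAt).mono hsub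
    have H := (h2.mul h3).sub (h1.mul h4)
    have hWfun : wron S f g = fun r => derivWithin f S r * g r - f r * derivWithin g S r := rfl
    rw [hWfun]
    refine H.congr_deriv (Eq.symm ?_)
    linear_combination (g p) * hf.2.1 p hpS - (f p) * hg.2.1 p hpS
  have hdiff : DifferentiableOn ℝ (wron S f g) (Set.Icc x y) :=
    fun p hp => (key p hp).differentiableWithinAt
  have hder : ∀ p ∈ Set.Ico x y, derivWithin (wron S f g) (Set.Icc x y) p = 0 := fun p hp =>
    (key p (Set.Ico_subset_Icc_self hp)).derivWithin
      ((uniqueDiffOn_Icc hlt) p (Set.Ico_subset_Icc_self hp))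
  exact constant_of_derivWithin_zero hdiff hder y (Set.right_mem_Icc.mpr hxy)

/-- constancy of the Wronskian: for two solutions `u, v` of the interface
equation `-u'' = z u` on `[a, b]`, the Wronskian `W(u, v)` is constant on `[a, b]` off the
atoms; in particular for the solutions `u_N, u_D` with `u_N(a) = 1, u_N'(a) = 0`,
`u_D(a) = 0, u_D'(a) = 1` one has `W(u_N, u_D) ≡ -1` there. -/
theorem wronskian_constant
    (ts bs : ℕ → ℝ) (γ : ℝ) (hγ : 0 < γ)
    (ht_mono : StrictMono ts) (hgap : ∀ n, γ ≤ ts (n + 1) - ts n)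
    (hbs : ∀ n, 1 < bs n)
    (z : ℂ) (a b : ℝ) (hab : a ≤ b)
    (ha : a ∉ Set.range ts) (hb : b ∉ Set.range ts)
    (u v : ℝ → ℂ)
    (hu : IsInterfaceSolution ts bs z (Icc a b) u)
    (hv : IsInterfaceSolution ts bs z (Icc a b) v) :
    (∀ r₁ ∈ offAtoms ts (Icc a b), ∀ r₂ ∈ offAtoms ts (Icc a b),
        wron (offAtoms ts (Icc a b)) u v r₁ = wron (offAtoms ts (Icc a b)) u v r₂) ∧
    (∀ uN uD : ℝ → ℂ,
        IsInterfaceSolution ts bs z (Icc a b) uN →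
        IsInterfaceSolution ts bs z (Icc a b) uD →
        uN a = 1 → derivWithin uN (offAtoms ts (Icc a b)) a = 0 →
        uD a = 0 → derivWithin uD (offAtoms ts (Icc a b)) a = 1 →
        ∀ r ∈ offAtoms ts (Icc a b), wron (offAtoms ts (Icc a b)) uN uD r = -1) := by
  set S := offAtoms ts (Icc a b) with hSdef
  have haS : a ∈ S := ⟨⟨le_refl a, hab⟩, ha⟩
  have main : ∀ f g : ℝ → ℂ, IsInterfaceSolution ts bs z (Icc a b) f →
      IsInterfaceSolution ts bs z (Icc a b) g →
      ∀ r₁ ∈ S, ∀ r₂ ∈ S, r₁ ≤ r₂ → wron S f g r₁ = wron S f g r₂ := by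
    intro f g hf hg r₁ hr₁ r₂ hr₂ hle
    rcases eq_or_lt_of_le hle with rfl | hlt
    · rfl
    have hab' : a < b := lt_of_le_of_lt hr₁.1.1 (lt_of_lt_of_le hlt hr₂.1.2)
    have hUD := offAtoms_uniqueDiffOn ts γ hγ hgap hab'
    have clear : ∀ p q : ℝ, p ∈ S → q ∈ S → p ≤ q → {n : ℕ | ts n ∈ Set.Ioo p q} = ∅ →
        wron S f g p = wron S f g q := by
      intro p q hp hq hpq hempty
      refine (wron_const_on_clear ts bs z a b f g hf hg hUD hpq ?_).symm
      intro w hw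
      refine ⟨⟨le_trans hp.1.1 hw.1, le_trans hw.2 hq.1.2⟩, ?_⟩
      rintro ⟨m, rfl⟩
      rcases eq_or_lt_of_le hw.1 with h | h
      · exact hp.2 ⟨m, h.symm⟩
      rcases eq_or_lt_of_le hw.2 with h2 | h2
      · exact hq.2 ⟨m, h2⟩
      have hm : m ∈ {n : ℕ | ts n ∈ Set.Ioo p q} := ⟨h, h2⟩
      rw [hempty] at hm
      exact hm
    have key : ∀ k : ℕ, ∀ p, p ∈ S → ∀ q, q ∈ S → p ≤ q →
        {n : ℕ | ts n ∈ Set.Ioo p q}.ncard ≤ k → wron S f g p = wron S f g q := by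
      intro k
      induction k with
      | zero =>
        intro p hp q hq hpq hcard
        have hAfin : {n : ℕ | ts n ∈ Set.Ioo p q}.Finite :=
          (atoms_finite ts γ hγ hgap q).subset fun n hn => hn.2
        exact clear p q hp hq hpq ((Set.ncard_eq_zero hAfin).mp (Nat.le_zero.mp hcard))
      | succ k ih =>
        intro p hp q hq hpq hcard
        have hAfin : {n : ℕ | ts n ∈ Set.Ioo p q}.Finite :=
          (atoms_finite ts γ hγ hgap q).subset fun n hn => hn.2
        by_cases hA : {n : ℕ | ts n ∈ Set.Ioo p q} = ∅
        · exact clear p q hp hq hpq hA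
        have hne : hAfin.toFinset.Nonempty := by
          rw [Set.Finite.toFinset_nonempty]
          exact Set.nonempty_iff_ne_empty.mpr hA
        set n₀ := hAfin.toFinset.min' hne with hn₀def
        have hn₀A : ts n₀ ∈ Set.Ioo p q := by
          have := hAfin.toFinset.min'_mem hne
          rwa [Set.Finite.mem_toFinset] at this
        have hmin : ∀ m, ts m ∈ Set.Ioo p q → n₀ ≤ m := fun m hm =>
          hAfin.toFinset.min'_le m (by rwa [Set.Finite.mem_toFinset])
        set t := ts n₀ with htdef
        have hta : a < t := lt_of_le_of_lt hp.1.1 hn₀A.1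
        have htb : t < b := lt_of_lt_of_le hn₀A.2 hq.1.2
        have hnoleft : ∀ m, ts m ∉ Set.Ioo p t := by
          rintro m ⟨h1, h2⟩
          have hmA := hmin m ⟨h1, lt_trans h2 hn₀A.2⟩
          have : m < n₀ := ht_mono.lt_iff_lt.mp h2
          omega
        have hnoright : ∀ m, ts m ∉ Set.Ioo t (t + γ) := no_atom_in_gap ts γ ht_mono hgap n₀
        have hleftS : ∀ w, p ≤ w → w < t → w ∈ S := by
          intro w hpw hwt
          refine ⟨⟨le_trans hp.1.1 hpw, le_of_lt (lt_trans hwt htb)⟩, ?_⟩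
          rintro ⟨m, rfl⟩
          rcases eq_or_lt_of_le hpw with h | h
          · exact hp.2 ⟨m, h.symm⟩
          · exact hnoleft m ⟨h, hwt⟩
        have hWleft : ∀ w, p ≤ w → w < t → wron S f g p = wron S f g w := by
          intro w hpw hwt
          refine (wron_const_on_clear ts bs z a b f g hf hg hUD hpw ?_).symm
          intro w' hw'
          exact hleftS w' hw'.1 (lt_of_le_of_lt hw'.2 hwt)
        have htm' : t < min q (t + γ) := lt_min hn₀A.2 (by linarith)
        set r' := (t + min q (t + γ)) / 2 with hr'def
        have htr' : t < r' := by simp only [hr'def]; linarith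
        have hr'm' : r' < min q (t + γ) := by simp only [hr'def]; linarith
        have hrightS : ∀ w, t < w → w ≤ r' → w ∈ S := by
          intro w htw hwr'
          have hwq : w < q := lt_of_le_of_lt hwr' (lt_of_lt_of_le hr'm' (min_le_left _ _))
          refine ⟨⟨le_of_lt (lt_trans hta htw), le_of_lt (lt_of_lt_of_le hwq hq.1.2)⟩, ?_⟩
          rintro ⟨m, rfl⟩
          exact hnoright m ⟨htw, lt_of_le_of_lt hwr' (lt_of_lt_of_le hr'm' (min_le_right _ _))⟩
        have hr'S : r' ∈ S := hrightS r' htr' le_rfl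
        have hWright : ∀ w, t < w → w ≤ r' → wron S f g w = wron S f g r' := by
          intro w htw hwr'
          refine (wron_const_on_clear ts bs z a b f g hf hg hUD hwr' ?_).symm
          intro w' hw'
          exact hrightS w' (lt_of_lt_of_le htw hw'.1) hw'.2
        have htint : t ∈ interior (Icc a b) := by rw [interior_Icc]; exact ⟨hta, htb⟩
        obtain ⟨fL, fR, dfL, dfR, hfL, hfR, hdfL, hdfR, hfjump, hdfjump⟩ := hf.2.2 n₀ htint
        obtain ⟨gL, gR, dgL, dgR, hgL, hgR, hdgL, hdgR, hgjump, hdgjump⟩ := hg.2.2 n₀ htint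
        -- left limit
        have cLlt : max p (t - 1) < t := max_lt hn₀A.1 (by linarith)
        have hIooL : Set.Ioo (max p (t - 1)) t ⊆ S ∩ Set.Iio t := fun w hw =>
          ⟨hleftS w (le_trans (le_max_left _ _) hw.1.le) hw.2, hw.2⟩
        have hneL : (𝓝[S ∩ Set.Iio t] t).NeBot := by
          have h1 : (𝓝[Set.Ioo (max p (t - 1)) t] t).NeBot := by
            rw [← mem_closure_iff_nhdsWithin_neBot, closure_Ioo (ne_of_lt cLlt)]
            exact ⟨cLlt.le, le_rfl⟩
          exact h1.mono (nhdsWithin_mono t hIooL)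
        have hWtendL : Tendsto (wron S f g) (𝓝[S ∩ Set.Iio t] t)
            (𝓝 (dfL * gL - fL * dgL)) := (hdfL.mul hgL).sub (hfL.mul hdgL)
        have hWL : dfL * gL - fL * dgL = wron S f g p := by
          have hIoi : Set.Ioi p ∈ 𝓝[S ∩ Set.Iio t] t :=
            nhdsWithin_le_nhds (Ioi_mem_nhds hn₀A.1)
          have hev : wron S f g =ᶠ[𝓝[S ∩ Set.Iio t] t] fun _ => wron S f g p := by
            filter_upwards [self_mem_nhdsWithin, hIoi] with w hw hwp
            exact (hWleft w hwp.le hw.2).symm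
          exact tendsto_nhds_unique (hWtendL.congr' hev) tendsto_const_nhds
        -- right limit
        have hIooR : Set.Ioo t r' ⊆ S ∩ Set.Ioi t := fun w hw =>
          ⟨hrightS w hw.1 hw.2.le, hw.1⟩
        have hneR : (𝓝[S ∩ Set.Ioi t] t).NeBot := by
          have h1 : (𝓝[Set.Ioo t r'] t).NeBot := by
            rw [← mem_closure_iff_nhdsWithin_neBot, closure_Ioo (ne_of_lt htr')]
            exact ⟨le_rfl, htr'.le⟩
          exact h1.mono (nhdsWithin_mono t hIooR)
        have hWtendR : Tendsto (wron S f g) (𝓝[S ∩ Set.Ioi t] t)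
            (𝓝 (dfR * gR - fR * dgR)) := (hdfR.mul hgR).sub (hfR.mul hdgR)
        have hWR : dfR * gR - fR * dgR = wron S f g r' := by
          have hIio : Set.Iio r' ∈ 𝓝[S ∩ Set.Ioi t] t :=
            nhdsWithin_le_nhds (Iio_mem_nhds htr')
          have hev : wron S f g =ᶠ[𝓝[S ∩ Set.Ioi t] t] fun _ => wron S f g r' := by
            filter_upwards [self_mem_nhdsWithin, hIio] with w hw hwr'
            exact hWright w hw.2 hwr'.le
          exact tendsto_nhds_unique (hWtendR.congr' hev) tendsto_const_nhds
        -- jump algebra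
        have hc : ((Real.sqrt (bs n₀) : ℝ) : ℂ) ≠ 0 :=
          Complex.ofReal_ne_zero.mpr (Real.sqrt_pos.mpr (lt_trans one_pos (hbs n₀))).ne'
        have hjump : dfR * gR - fR * dgR = dfL * gL - fL * dgL := by
          rw [hfjump, hgjump, hdfjump, hdgjump]
          field_simp
        have hstep : wron S f g p = wron S f g r' := by
          rw [← hWL, ← hjump, hWR]
        -- induction on remaining atoms
        have hsubA : {n : ℕ | ts n ∈ Set.Ioo r' q} ⊆ {n : ℕ | ts n ∈ Set.Ioo p q} \ {n₀} := by
          intro m hm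
          refine ⟨⟨lt_trans hn₀A.1 (lt_trans htr' hm.1), hm.2⟩, ?_⟩
          simp only [Set.mem_singleton_iff]
          intro h
          rw [h] at hm
          exact absurd hm.1 (not_lt.mpr htr'.le)
        have hcard' : {n : ℕ | ts n ∈ Set.Ioo r' q}.ncard ≤ k := by
          have h1 : {n : ℕ | ts n ∈ Set.Ioo r' q}.ncard ≤
              ({n : ℕ | ts n ∈ Set.Ioo p q} \ {n₀}).ncard :=
            Set.ncard_le_ncard hsubA hAfin.diff
          have h2 : ({n : ℕ | ts n ∈ Set.Ioo p q} \ {n₀}).ncard =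
              {n : ℕ | ts n ∈ Set.Ioo p q}.ncard - 1 :=
            Set.ncard_diff_singleton_of_mem (s := {n : ℕ | ts n ∈ Set.Ioo p q}) hn₀A
          have h3 : 1 ≤ {n : ℕ | ts n ∈ Set.Ioo p q}.ncard :=
            (Set.ncard_pos hAfin).mpr ⟨n₀, hn₀A⟩
          omega
        have hr'q : r' ≤ q := (lt_of_lt_of_le hr'm' (min_le_left _ _)).le
        exact hstep.trans (ih r' hr'S q hq hr'q hcard')
    have hfin : {n : ℕ | ts n ∈ Set.Ioo r₁ r₂}.Finite :=
      (atoms_finite ts γ hγ hgap r₂).subset fun n hn => hn.2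
    exact key _ r₁ hr₁ r₂ hr₂ hlt.le le_rfl
  constructor
  · intro r₁ hr₁ r₂ hr₂
    rcases le_total r₁ r₂ with h | h
    · exact main u v hu hv r₁ hr₁ r₂ hr₂ h
    · exact (main u v hu hv r₂ hr₂ r₁ hr₁ h).symm
  · intro uN uD huN huD e1 e2 e3 e4 r hr
    have h := main uN uD huN huD a haS r hr
    have ha' : wron S uN uD a = -1 := by
      simp only [wron, e1, e2, e3, e4]
      ring
    rcases le_total a r with hle | hle
    · rw [← main uN uD huN huD a haS r hr hle]; exact ha'
    · rw [main uN uD huN huD r hr a haS hle]; exact ha'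
end

section
/- Nesting of Weyl discs: let z ∈ ℂ with Im z > 0, let a < b₁ ≤ b₂ with a, b₁, b₂ ∉ {t_n : n}, and let u_N, u_D be the solutions of the interface equation −u'' = z u for μ on [a, b₂] with u_N(a) = 1, u_N'(a) = 0, u_D(a) = 0, u_D'(a) = 1. With M(z, b) := W(u_N, ū_D)(b)/W(u_D, ū_D)(b) and r(z, b) := 1/|W(u_D, ū_D)(b)|, the closed disc {m ∈ ℂ : |m − M(z, b₂)| ≤ r(z, b₂)} is contained in the closed disc {m ∈ ℂ : |m − M(z, b₁)| ≤ r(z, b₁)}; in particular r(z, b₂) ≤ r(z, b₁). -/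
open Set Filter Topology MeasureTheory

section Sol
variable {ts bs : ℕ → ℝ} {z : ℂ} {a b₂ : ℝ} {u f g : ℝ → ℂ}

lemma sol_contOn (hu : IsInterfaceSolution ts bs z (Icc a b₂) u) :
    ContinuousOn u (offAtoms ts (Icc a b₂)) := hu.1.continuousOn

lemma sol_deriv_contDiffOn (hud : UniqueDiffOn ℝ (offAtoms ts (Icc a b₂)))
    (hu : IsInterfaceSolution ts bs z (Icc a b₂) u) :
    ContDiffOn ℝ 1 (derivWithin u (offAtoms ts (Icc a b₂))) (offAtoms ts (Icc a b₂)) :=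
  hu.1.derivWithin hud (by norm_num)

lemma sol_deriv_contOn (hud : UniqueDiffOn ℝ (offAtoms ts (Icc a b₂)))
    (hu : IsInterfaceSolution ts bs z (Icc a b₂) u) :
    ContinuousOn (derivWithin u (offAtoms ts (Icc a b₂))) (offAtoms ts (Icc a b₂)) :=
  (sol_deriv_contDiffOn hud hu).continuousOn

lemma sol_hasDerivAt (hu : IsInterfaceSolution ts bs z (Icc a b₂) u)
    {s : ℝ} (hs : s ∈ offAtoms ts (Icc a b₂)) (hnhds : offAtoms ts (Icc a b₂) ∈ 𝓝 s) :
    HasDerivAt u (derivWithin u (offAtoms ts (Icc a b₂)) s) s := by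
  have h := ((hu.1.differentiableOn (by norm_num)) s hs).differentiableAt hnhds
  rw [derivWithin_of_mem_nhds hnhds]
  exact h.hasDerivAt

lemma sol_hasDerivAt' (hud : UniqueDiffOn ℝ (offAtoms ts (Icc a b₂)))
    (hu : IsInterfaceSolution ts bs z (Icc a b₂) u)
    {s : ℝ} (hs : s ∈ offAtoms ts (Icc a b₂)) (hnhds : offAtoms ts (Icc a b₂) ∈ 𝓝 s) :
    HasDerivAt (derivWithin u (offAtoms ts (Icc a b₂))) (-(z * u s)) s := by
  have h := (((sol_deriv_contDiffOn hud hu).differentiableOn (by norm_num)) s hs).differentiableAt hnhds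
  have e : deriv (derivWithin u (offAtoms ts (Icc a b₂))) s = -(z * u s) := by
    rw [← derivWithin_of_mem_nhds hnhds, ← hu.2.1 s hs, neg_neg]
  rw [← e]
  exact h.hasDerivAt

end Sol

section Wron
variable {ts bs : ℕ → ℝ} {z : ℂ} {a b₂ : ℝ} {f g : ℝ → ℂ}

lemma wronConj_hasDerivAt (hud : UniqueDiffOn ℝ (offAtoms ts (Icc a b₂)))
    (hf : IsInterfaceSolution ts bs z (Icc a b₂) f)
    (hg : IsInterfaceSolution ts bs z (Icc a b₂) g)
    {s : ℝ} (hs : s ∈ offAtoms ts (Icc a b₂)) (hnhds : offAtoms ts (Icc a b₂) ∈ 𝓝 s) :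
    HasDerivAt (wronConj (offAtoms ts (Icc a b₂)) f g)
      (((starRingEnd ℂ) z - z) * (f s * (starRingEnd ℂ) (g s))) s := by
  set S := offAtoms ts (Icc a b₂)
  have hf1 := sol_hasDerivAt hf hs hnhds
  have hf2 := sol_hasDerivAt' hud hf hs hnhds
  have hg1 := sol_hasDerivAt hg hs hnhds
  have hg2 := sol_hasDerivAt' hud hg hs hnhds
  have c1 : HasDerivAt (fun r => (starRingEnd ℂ) (g r))
      ((starRingEnd ℂ) (derivWithin g S s)) s := by
    simpa only [starRingEnd_apply] using hg1.star
  have c2 : HasDerivAt (fun r => (starRingEnd ℂ) (derivWithin g S r))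
      ((starRingEnd ℂ) (-(z * g s))) s := by
    simpa only [starRingEnd_apply] using hg2.star
  have h := (hf2.mul c1).sub (hf1.mul c2)
  have : wronConj S f g = fun r =>
      derivWithin f S r * (starRingEnd ℂ) (g r) - f r * (starRingEnd ℂ) (derivWithin g S r) := rfl
  rw [this]
  convert h using 1
  rfl
  rfl
  simp only [map_neg, map_mul]
  ring

lemma wronConj_contOn (hud : UniqueDiffOn ℝ (offAtoms ts (Icc a b₂)))
    (hf : IsInterfaceSolution ts bs z (Icc a b₂) f)
    (hg : IsInterfaceSolution ts bs z (Icc a b₂) g) :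
    ContinuousOn (wronConj (offAtoms ts (Icc a b₂)) f g) (offAtoms ts (Icc a b₂)) := by
  have h1 := sol_deriv_contOn hud hf
  have h2 := sol_contOn hg
  have h3 := sol_contOn hf
  have h4 := sol_deriv_contOn hud hg
  exact (h1.mul h2.star).sub (h3.mul h4.star)

lemma wron_hasDerivAt (hud : UniqueDiffOn ℝ (offAtoms ts (Icc a b₂)))
    (hf : IsInterfaceSolution ts bs z (Icc a b₂) f)
    (hg : IsInterfaceSolution ts bs z (Icc a b₂) g)
    {s : ℝ} (hs : s ∈ offAtoms ts (Icc a b₂)) (hnhds : offAtoms ts (Icc a b₂) ∈ 𝓝 s) :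
    HasDerivAt (wron (offAtoms ts (Icc a b₂)) f g) 0 s := by
  set S := offAtoms ts (Icc a b₂)
  have hf1 := sol_hasDerivAt hf hs hnhds
  have hf2 := sol_hasDerivAt' hud hf hs hnhds
  have hg1 := sol_hasDerivAt hg hs hnhds
  have hg2 := sol_hasDerivAt' hud hg hs hnhds
  have h := (hf2.mul hg1).sub (hf1.mul hg2)
  have : wron S f g = fun r => derivWithin f S r * g r - f r * derivWithin g S r := rfl
  rw [this]
  convert h using 1
  rfl
  rfl
  ring

lemma wronConj_jump (hbs : ∀ n, 1 < bs n)
    (hf : IsInterfaceSolution ts bs z (Icc a b₂) f)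
    (hg : IsInterfaceSolution ts bs z (Icc a b₂) g)
    {n : ℕ} (hn : ts n ∈ Ioo a b₂) :
    ∃ L, Tendsto (wronConj (offAtoms ts (Icc a b₂)) f g)
        (𝓝[offAtoms ts (Icc a b₂) ∩ Iio (ts n)] (ts n)) (𝓝 L) ∧
      Tendsto (wronConj (offAtoms ts (Icc a b₂)) f g)
        (𝓝[offAtoms ts (Icc a b₂) ∩ Ioi (ts n)] (ts n)) (𝓝 L) := by
  set S := offAtoms ts (Icc a b₂)
  have hni : ts n ∈ interior (Icc a b₂) := by rwa [interior_Icc]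
  obtain ⟨fL, fR, dfL, dfR, tf1, tf2, tf3, tf4, hfr, hdfr⟩ := hf.2.2 n hni
  obtain ⟨gL, gR, dgL, dgR, tg1, tg2, tg3, tg4, hgr, hdgr⟩ := hg.2.2 n hni
  have hc : ((Real.sqrt (bs n) : ℝ) : ℂ) ≠ 0 := by
    have : (0:ℝ) < Real.sqrt (bs n) := Real.sqrt_pos.mpr (lt_trans one_pos (hbs n))
    exact_mod_cast ne_of_gt this
  refine ⟨dfL * (starRingEnd ℂ) gL - fL * (starRingEnd ℂ) dgL, ?_, ?_⟩
  · exact (tf3.mul (tg1.star.congr (fun x => (starRingEnd_apply _).symm))).sub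
      (tf1.mul (tg3.star.congr (fun x => (starRingEnd_apply _).symm)))
  · have h := (tf4.mul (tg2.star.congr (fun x => (starRingEnd_apply _).symm))).sub
      (tf2.mul (tg4.star.congr (fun x => (starRingEnd_apply _).symm)))
    convert h using 2
    rfl
    rw [hfr, hdfr, hgr, hdgr]
    simp only [← starRingEnd_apply, map_mul, map_div₀, Complex.conj_ofReal]
    field_simp

lemma wron_jump (hbs : ∀ n, 1 < bs n)
    (hf : IsInterfaceSolution ts bs z (Icc a b₂) f)
    (hg : IsInterfaceSolution ts bs z (Icc a b₂) g)
    {n : ℕ} (hn : ts n ∈ Ioo a b₂) :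
    ∃ L, Tendsto (wron (offAtoms ts (Icc a b₂)) f g)
        (𝓝[offAtoms ts (Icc a b₂) ∩ Iio (ts n)] (ts n)) (𝓝 L) ∧
      Tendsto (wron (offAtoms ts (Icc a b₂)) f g)
        (𝓝[offAtoms ts (Icc a b₂) ∩ Ioi (ts n)] (ts n)) (𝓝 L) := by
  set S := offAtoms ts (Icc a b₂)
  have hni : ts n ∈ interior (Icc a b₂) := by rwa [interior_Icc]
  obtain ⟨fL, fR, dfL, dfR, tf1, tf2, tf3, tf4, hfr, hdfr⟩ := hf.2.2 n hni
  obtain ⟨gL, gR, dgL, dgR, tg1, tg2, tg3, tg4, hgr, hdgr⟩ := hg.2.2 n hni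
  have hc : ((Real.sqrt (bs n) : ℝ) : ℂ) ≠ 0 := by
    have : (0:ℝ) < Real.sqrt (bs n) := Real.sqrt_pos.mpr (lt_trans one_pos (hbs n))
    exact_mod_cast ne_of_gt this
  refine ⟨dfL * gL - fL * dgL, ?_, ?_⟩
  · exact (tf3.mul tg1).sub (tf1.mul tg3)
  · have h := (tf4.mul tg2).sub (tf2.mul tg4)
    convert h using 2
    rfl
    rw [hfr, hdfr, hgr, hdgr]
    field_simp

end Wron


section Atoms
variable {ts : ℕ → ℝ} {γ : ℝ} {a b₂ : ℝ}

lemma ts_lower (hγ : 0 < γ) (hgap : ∀ n, γ ≤ ts (n + 1) - ts n) (n : ℕ) :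
    ts 0 + n * γ ≤ ts n := by
  induction n with
  | zero => simp
  | succ n ih =>
    have := hgap n
    push_cast
    nlinarith

lemma finite_atoms (hγ : 0 < γ) (hgap : ∀ n, γ ≤ ts (n + 1) - ts n) (d : ℝ) :
    {n : ℕ | ts n ≤ d}.Finite := by
  apply Set.Finite.subset (Set.finite_Iic ⌈(d - ts 0)/γ⌉₊)
  intro n hn
  simp only [Set.mem_setOf_eq] at hn
  simp only [Set.mem_Iic]
  have h1 := ts_lower hγ hgap (ts := ts) n
  have h2 : (n : ℝ) ≤ (d - ts 0)/γ := by
    rw [le_div_iff₀ hγ]; nlinarith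
  calc n ≤ ⌈(n:ℝ)⌉₊ := by simp
    _ ≤ ⌈(d - ts 0)/γ⌉₊ := Nat.ceil_le_ceil h2

lemma no_atom_left (ht : StrictMono ts) (hgap : ∀ n, γ ≤ ts (n + 1) - ts n) (n m : ℕ) :
    ts m ∉ Ioo (ts n - γ) (ts n) := by
  rintro ⟨h1, h2⟩
  have hmn : m < n := ht.lt_iff_lt.mp h2
  rcases Nat.exists_eq_add_of_lt hmn with ⟨k, rfl⟩
  linarith [hgap (m+k), ht.monotone (show m ≤ m + k by omega),
    show m + k + 1 = m + k + 1 from rfl]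

lemma no_atom_right (ht : StrictMono ts) (hgap : ∀ n, γ ≤ ts (n + 1) - ts n) (n m : ℕ) :
    ts m ∉ Ioo (ts n) (ts n + γ) := by
  rintro ⟨h1, h2⟩
  have hmn : n < m := ht.lt_iff_lt.mp h1
  have h3 : ts (n+1) ≤ ts m := ht.monotone (by omega)
  linarith [hgap n]

lemma exists_ball_no_atoms (hγ : 0 < γ) (hgap : ∀ n, γ ≤ ts (n + 1) - ts n)
    {x : ℝ} (hx : x ∉ Set.range ts) :
    ∃ ε > 0, ∀ m, ts m ∉ Ioo (x - ε) (x + ε) := by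
  have hF : {n : ℕ | ts n ≤ x + 1}.Finite := finite_atoms hγ hgap _
  rcases hF.toFinset.eq_empty_or_nonempty with he | hne
  · refine ⟨1, one_pos, fun m hm => ?_⟩
    have h : ts m ≤ x + 1 := le_of_lt hm.2
    have : m ∈ hF.toFinset := by simp [h]
    simp [he] at this
  · set ε₀ := hF.toFinset.inf' hne (fun n => |ts n - x|) with hε₀
    have hpos : 0 < ε₀ := by
      rw [hε₀, Finset.lt_inf'_iff]
      intro n hn
      rw [abs_pos, sub_ne_zero]
      exact fun h => hx ⟨n, h⟩
    refine ⟨min 1 ε₀, lt_min one_pos hpos, fun m hm => ?_⟩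
    have h1 : |ts m - x| < min 1 ε₀ := by
      rw [abs_sub_lt_iff]; constructor <;> [linarith [hm.2]; linarith [hm.1]]
    have hle : ts m ≤ x + 1 := by
      have := lt_of_lt_of_le h1 (min_le_left _ _)
      rw [abs_sub_lt_iff] at this; linarith [this.1]
    have hmem : m ∈ hF.toFinset := by simp [hle]
    have h2 : ε₀ ≤ |ts m - x| := Finset.inf'_le _ hmem
    have := lt_of_lt_of_le h1 (min_le_right _ _)
    linarith

lemma S_mem_nhds (hγ : 0 < γ) (hgap : ∀ n, γ ≤ ts (n + 1) - ts n)
    {x : ℝ} (hx : x ∈ offAtoms ts (Icc a b₂)) (h1 : a < x) (h2 : x < b₂) :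
    offAtoms ts (Icc a b₂) ∈ 𝓝 x := by
  obtain ⟨ε, hεpos, hε⟩ := exists_ball_no_atoms hγ hgap hx.2
  have hmem : Ioo (max (x - ε) a) (min (x + ε) b₂) ∈ 𝓝 x :=
    Ioo_mem_nhds (by simp [h1, hεpos]) (by simp [h2, hεpos])
  refine Filter.mem_of_superset hmem ?_
  rintro y ⟨hy1, hy2⟩
  refine ⟨⟨le_of_lt (lt_of_le_of_lt (le_max_right _ _) hy1),
    le_of_lt (lt_of_lt_of_le hy2 (min_le_right _ _))⟩, ?_⟩
  rintro ⟨m, rfl⟩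
  exact hε m ⟨lt_of_le_of_lt (le_max_left _ _) hy1, lt_of_lt_of_le hy2 (min_le_left _ _)⟩

lemma uniqueDiffOn_S (hγ : 0 < γ) (hgap : ∀ n, γ ≤ ts (n + 1) - ts n)
    (hab : a < b₂) : UniqueDiffOn ℝ (offAtoms ts (Icc a b₂)) := by
  intro x hx
  obtain ⟨ε, hεpos, hε⟩ := exists_ball_no_atoms hγ hgap hx.2
  set T : Set ℝ := Ioo (x - ε) (x + ε) ∩ Icc a b₂ with hT
  have hTS : T ⊆ offAtoms ts (Icc a b₂) := by
    rintro y ⟨hy1, hy2⟩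
    exact ⟨hy2, by rintro ⟨m, rfl⟩; exact hε m hy1⟩
  have hconv : Convex ℝ T := (convex_Ioo _ _).inter (convex_Icc _ _)
  have hxT : x ∈ closure T :=
    subset_closure ⟨⟨by linarith, by linarith⟩, hx.1⟩
  have hint : (interior T).Nonempty := by
    rw [hT, interior_inter, interior_Ioo, interior_Icc, Ioo_inter_Ioo]
    rw [nonempty_Ioo]
    have hx1 := hx.1.1; have hx2 := hx.1.2
    apply max_lt <;> apply lt_min <;> linarith
  exact (uniqueDiffWithinAt_convex hconv hint hxT).mono hTS

end Atoms
section Gen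
variable {ts : ℕ → ℝ} {γ : ℝ} {a b₂ : ℝ} {g : ℝ → ℝ}

lemma gen0 (hg_cont : ContinuousOn g (offAtoms ts (Icc a b₂)))
    (hg_deriv : ∀ s ∈ offAtoms ts (Icc a b₂) ∩ Ioo a b₂, ∃ g', HasDerivAt g g' s ∧ g' ≤ 0)
    {x y : ℝ} (hx : x ∈ offAtoms ts (Icc a b₂)) (hy : y ∈ offAtoms ts (Icc a b₂))
    (hxy : x ≤ y) (hno : ∀ n, ts n ∉ Ioo x y) : g y ≤ g x := by
  set S := offAtoms ts (Icc a b₂) with hS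
  have hIcc : Icc x y ⊆ S := by
    rintro s ⟨h1, h2⟩
    rcases eq_or_lt_of_le h1 with rfl | h1'
    · exact hx
    rcases eq_or_lt_of_le h2 with rfl | h2'
    · exact hy
    refine ⟨⟨le_trans hx.1.1 h1, le_trans h2 hy.1.2⟩, ?_⟩
    rintro ⟨m, rfl⟩
    exact hno m ⟨h1', h2'⟩
  have hmemIoo : ∀ s ∈ Ioo x y, s ∈ S ∩ Ioo a b₂ := by
    intro s hs
    exact ⟨hIcc (Ioo_subset_Icc_self hs), lt_of_le_of_lt hx.1.1 hs.1,
      lt_of_lt_of_le hs.2 hy.1.2⟩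
  have hanti : AntitoneOn g (Icc x y) := by
    apply antitoneOn_of_deriv_nonpos (convex_Icc x y) (hg_cont.mono hIcc)
    · intro s hs
      rw [interior_Icc] at hs
      obtain ⟨g', hd, _⟩ := hg_deriv s (hmemIoo s hs)
      exact hd.differentiableAt.differentiableWithinAt
    · intro s hs
      rw [interior_Icc] at hs
      obtain ⟨g', hd, hle⟩ := hg_deriv s (hmemIoo s hs)
      rw [hd.deriv]; exact hle
  exact hanti ⟨le_refl x, hxy⟩ ⟨hxy, le_refl y⟩ hxy

lemma gen_antitone (hγ : 0 < γ) (ht : StrictMono ts) (hgap : ∀ n, γ ≤ ts (n + 1) - ts n)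
    (hg_cont : ContinuousOn g (offAtoms ts (Icc a b₂)))
    (hg_deriv : ∀ s ∈ offAtoms ts (Icc a b₂) ∩ Ioo a b₂, ∃ g', HasDerivAt g g' s ∧ g' ≤ 0)
    (hjump : ∀ n, ts n ∈ Ioo a b₂ → ∃ L,
      Tendsto g (𝓝[offAtoms ts (Icc a b₂) ∩ Iio (ts n)] (ts n)) (𝓝 L) ∧
      Tendsto g (𝓝[offAtoms ts (Icc a b₂) ∩ Ioi (ts n)] (ts n)) (𝓝 L))
    {x y : ℝ} (hx : x ∈ offAtoms ts (Icc a b₂)) (hy : y ∈ offAtoms ts (Icc a b₂))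
    (hxy : x ≤ y) : g y ≤ g x := by
  set S := offAtoms ts (Icc a b₂) with hS
  have key : ∀ k : ℕ, ∀ x y : ℝ, x ∈ S → y ∈ S → x ≤ y →
      {n | ts n ∈ Ioo x y}.ncard ≤ k → g y ≤ g x := by
    intro k
    induction k with
    | zero =>
      intro x y hx hy hxy hcard
      have hfin : {n | ts n ∈ Ioo x y}.Finite :=
        (finite_atoms hγ hgap y).subset (fun n hn => le_of_lt hn.2)
      have hemp : {n | ts n ∈ Ioo x y} = ∅ := by
        rw [← Set.ncard_eq_zero hfin]; omega
      refine gen0 hg_cont hg_deriv hx hy hxy (fun n hn => ?_)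
      have : n ∈ {n | ts n ∈ Ioo x y} := hn
      rw [hemp] at this; exact this
    | succ k ih =>
      intro x y hx hy hxy hcard
      have hfin : {n | ts n ∈ Ioo x y}.Finite :=
        (finite_atoms hγ hgap y).subset (fun n hn => le_of_lt hn.2)
      rcases Set.eq_empty_or_nonempty {n | ts n ∈ Ioo x y} with hemp | hne
      · refine gen0 hg_cont hg_deriv hx hy hxy (fun n hn => ?_)
        have : n ∈ {n | ts n ∈ Ioo x y} := hn
        rw [hemp] at this; exact this
      · have hne' : hfin.toFinset.Nonempty := by rwa [Set.Finite.toFinset_nonempty]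
        set n₀ := hfin.toFinset.max' hne' with hn₀def
        have hn₀V : ts n₀ ∈ Ioo x y := by
          have := hfin.toFinset.max'_mem hne'
          rwa [Set.Finite.mem_toFinset] at this
        set p := ts n₀ with hpdef
        have hpx : x < p := hn₀V.1
        have hpy : p < y := hn₀V.2
        have hpa : a < p := lt_of_le_of_lt hx.1.1 hpx
        have hpb : p < b₂ := lt_of_lt_of_le hpy hy.1.2
        have hmax : ∀ m, ts m ∈ Ioo x y → ts m ≤ p := by
          intro m hm
          exact ht.monotone (hfin.toFinset.le_max' m (by rwa [Set.Finite.mem_toFinset]))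
        obtain ⟨L, hL1, hL2⟩ := hjump n₀ ⟨hpa, hpb⟩
        have hIocS : Ioc p y ⊆ S := by
          rintro s ⟨h1, h2⟩
          refine ⟨⟨le_trans hx.1.1 (le_of_lt (lt_trans hpx h1)), le_trans h2 hy.1.2⟩, ?_⟩
          rintro ⟨m, rfl⟩
          rcases eq_or_lt_of_le h2 with he | hlt
          · exact hy.2 ⟨m, he⟩
          · exact absurd h1 (not_lt.mpr (hmax m ⟨lt_trans hpx h1, hlt⟩))
        have hanti : AntitoneOn g (Ioc p y) := by
          apply antitoneOn_of_deriv_nonpos (convex_Ioc p y) (hg_cont.mono hIocS)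
          · intro s hs
            rw [interior_Ioc] at hs
            obtain ⟨g', hd, _⟩ := hg_deriv s ⟨hIocS (Ioo_subset_Ioc_self hs),
              lt_trans hpa hs.1, lt_of_lt_of_le hs.2 hy.1.2⟩
            exact hd.differentiableAt.differentiableWithinAt
          · intro s hs
            rw [interior_Ioc] at hs
            obtain ⟨g', hd, hle⟩ := hg_deriv s ⟨hIocS (Ioo_subset_Ioc_self hs),
              lt_trans hpa hs.1, lt_of_lt_of_le hs.2 hy.1.2⟩
            rw [hd.deriv]; exact hle
        have hneR : (𝓝[Ioo p y] p).NeBot := by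
          rw [← mem_closure_iff_nhdsWithin_neBot, closure_Ioo (ne_of_lt hpy)]
          exact ⟨le_refl p, le_of_lt hpy⟩
        have hsubR : Ioo p y ⊆ S ∩ Ioi p :=
          fun s hs => ⟨hIocS (Ioo_subset_Ioc_self hs), hs.1⟩
        have hR : Tendsto g (𝓝[Ioo p y] p) (𝓝 L) :=
          hL2.mono_left (nhdsWithin_mono _ hsubR)
        have hgyL : g y ≤ L := by
          refine ge_of_tendsto hR ?_
          filter_upwards [self_mem_nhdsWithin] with s hs
          exact hanti (Ioo_subset_Ioc_self hs) ⟨hpy, le_refl y⟩ (le_of_lt hs.2)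
        have hsubL : Ioo (max x (p - γ)) p ⊆ S ∩ Iio p := by
          rintro s ⟨h1, h2⟩
          have hsx : x < s := lt_of_le_of_lt (le_max_left _ _) h1
          refine ⟨⟨⟨le_trans hx.1.1 (le_of_lt hsx), le_of_lt (lt_trans h2 hpb)⟩, ?_⟩, h2⟩
          rintro ⟨m, rfl⟩
          exact no_atom_left ht hgap n₀ m ⟨lt_of_le_of_lt (le_max_right _ _) h1, h2⟩
        have hneL0 : (𝓝[Ioo (max x (p - γ)) p] p).NeBot := by
          rw [← mem_closure_iff_nhdsWithin_neBot,
            closure_Ioo (ne_of_lt (max_lt hpx (by linarith)))]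
          exact ⟨le_of_lt (max_lt hpx (by linarith)), le_refl p⟩
        have hneL : (𝓝[S ∩ Iio p] p).NeBot :=
          hneL0.mono (nhdsWithin_mono _ hsubL)
        have hLgx : L ≤ g x := by
          refine le_of_tendsto hL1 ?_
          have hev2 : ∀ᶠ s in 𝓝[S ∩ Iio p] p, x < s :=
            eventually_nhdsWithin_of_eventually_nhds (eventually_gt_nhds hpx)
          filter_upwards [self_mem_nhdsWithin, hev2] with s hs hxs
          apply ih x s hx hs.1 (le_of_lt hxs)
          have hsub : {m | ts m ∈ Ioo x s} ⊆ {n | ts n ∈ Ioo x y} \ {n₀} := by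
            intro m hm
            refine ⟨⟨hm.1, lt_trans (lt_trans hm.2 hs.2) hpy⟩, ?_⟩
            intro hmn
            rw [Set.mem_singleton_iff] at hmn
            subst hmn
            exact absurd (lt_trans hm.2 hs.2) (lt_irrefl p)
          have h1 : {m | ts m ∈ Ioo x s}.ncard ≤ ({n | ts n ∈ Ioo x y} \ {n₀}).ncard :=
            Set.ncard_le_ncard hsub (hfin.diff)
          have h2 : ({n | ts n ∈ Ioo x y} \ {n₀}).ncard < {n | ts n ∈ Ioo x y}.ncard :=
            Set.ncard_diff_singleton_lt_of_mem hn₀V hfin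
          omega
        linarith
  exact key _ x y hx hy hxy le_rfl
end Gen
section Comb
variable {ts bs : ℕ → ℝ} {γ : ℝ} {z : ℂ} {a b₂ : ℝ} {f g : ℝ → ℂ}

/-- The quadratic combination `Φ_m = W(f,f̄) - m̄·W(f,ḡ) + m·conj W(f,ḡ) + |m|²·W(g,ḡ)`. -/
noncomputable def phiComb (S : Set ℝ) (f g : ℝ → ℂ) (m : ℂ) (r : ℝ) : ℂ :=
  wronConj S f f r - (starRingEnd ℂ) m * wronConj S f g r
    + m * (starRingEnd ℂ) (wronConj S f g r)
    + (m * (starRingEnd ℂ) m) * wronConj S g g r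

lemma imPhi_antitone (hγ : 0 < γ) (ht : StrictMono ts)
    (hgap : ∀ n, γ ≤ ts (n + 1) - ts n) (hbs : ∀ n, 1 < bs n)
    (hz : 0 < z.im) (hab : a < b₂)
    (hf : IsInterfaceSolution ts bs z (Icc a b₂) f)
    (hg : IsInterfaceSolution ts bs z (Icc a b₂) g) (m : ℂ)
    {x y : ℝ} (hx : x ∈ offAtoms ts (Icc a b₂)) (hy : y ∈ offAtoms ts (Icc a b₂))
    (hxy : x ≤ y) :
    (phiComb (offAtoms ts (Icc a b₂)) f g m y).im
      ≤ (phiComb (offAtoms ts (Icc a b₂)) f g m x).im := by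
  set S := offAtoms ts (Icc a b₂) with hS
  have hud : UniqueDiffOn ℝ S := uniqueDiffOn_S hγ hgap hab
  apply gen_antitone hγ ht hgap (g := fun r => (phiComb S f g m r).im) ?_ ?_ ?_ hx hy hxy
  · -- continuity
    have h1 := wronConj_contOn hud hf hf
    have h2 := wronConj_contOn hud hf hg
    have h3 := wronConj_contOn hud hg hg
    apply Complex.continuous_im.comp_continuousOn
    exact ((h1.sub ((continuousOn_const).mul h2)).add
      ((continuousOn_const).mul h2.star)).add ((continuousOn_const).mul h3)
  · -- derivative
    intro s hs
    have hnhds : S ∈ 𝓝 s := S_mem_nhds hγ hgap hs.1 hs.2.1 hs.2.2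
    have hA := wronConj_hasDerivAt hud hf hf hs.1 hnhds
    have hc := wronConj_hasDerivAt hud hf hg hs.1 hnhds
    have hq := wronConj_hasDerivAt hud hg hg hs.1 hnhds
    have hcc : HasDerivAt (fun r => (starRingEnd ℂ) (wronConj S f g r))
        ((starRingEnd ℂ) (((starRingEnd ℂ) z - z) * (f s * (starRingEnd ℂ) (g s)))) s := by
      simpa only [starRingEnd_apply] using hc.star
    have hΦ : HasDerivAt (phiComb S f g m)
        ((((starRingEnd ℂ) z - z) * (f s * (starRingEnd ℂ) (f s))
          - (starRingEnd ℂ) m * (((starRingEnd ℂ) z - z) * (f s * (starRingEnd ℂ) (g s)))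
          + m * (starRingEnd ℂ) (((starRingEnd ℂ) z - z) * (f s * (starRingEnd ℂ) (g s))))
          + (m * (starRingEnd ℂ) m) * (((starRingEnd ℂ) z - z) * (g s * (starRingEnd ℂ) (g s)))) s :=
      ((hA.sub (hc.const_mul _)).add (hcc.const_mul m)).add (hq.const_mul _)
    refine ⟨_, Complex.imCLM.hasFDerivAt.comp_hasDerivAt s hΦ, ?_⟩
    have hD : (((starRingEnd ℂ) z - z) * (f s * (starRingEnd ℂ) (f s))
          - (starRingEnd ℂ) m * (((starRingEnd ℂ) z - z) * (f s * (starRingEnd ℂ) (g s)))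
          + m * (starRingEnd ℂ) (((starRingEnd ℂ) z - z) * (f s * (starRingEnd ℂ) (g s))))
          + (m * (starRingEnd ℂ) m) * (((starRingEnd ℂ) z - z) * (g s * (starRingEnd ℂ) (g s)))
        = ((starRingEnd ℂ) z - z) * ((f s - m * g s) * (starRingEnd ℂ) (f s - m * g s)) := by
      simp only [map_sub, map_mul, Complex.conj_conj]
      ring
    show (Complex.imCLM _ : ℝ) ≤ 0
    rw [hD]
    show (((starRingEnd ℂ) z - z) * ((f s - m * g s) * (starRingEnd ℂ) (f s - m * g s))).im ≤ 0
    rw [Complex.mul_conj]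
    simp only [Complex.mul_im, Complex.sub_im, Complex.sub_re, Complex.conj_re,
      Complex.conj_im, Complex.ofReal_im, Complex.ofReal_re]
    nlinarith [Complex.normSq_nonneg (f s - m * g s), hz]
  · -- jumps
    intro n hn
    obtain ⟨LA, hLA1, hLA2⟩ := wronConj_jump hbs hf hf hn
    obtain ⟨Lc, hLc1, hLc2⟩ := wronConj_jump hbs hf hg hn
    obtain ⟨Lq, hLq1, hLq2⟩ := wronConj_jump hbs hg hg hn
    refine ⟨(LA - (starRingEnd ℂ) m * Lc + m * (starRingEnd ℂ) Lc
        + (m * (starRingEnd ℂ) m) * Lq).im, ?_, ?_⟩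
    · exact (Complex.continuous_im.tendsto _).comp
        (((hLA1.sub (hLc1.const_mul _)).add
          ((hLc1.star.congr (fun x => (starRingEnd_apply _).symm)).const_mul m)).add
          (hLq1.const_mul _))
    · exact (Complex.continuous_im.tendsto _).comp
        (((hLA2.sub (hLc2.const_mul _)).add
          ((hLc2.star.congr (fun x => (starRingEnd_apply _).symm)).const_mul m)).add
          (hLq2.const_mul _))
end Comb
section Const
variable {ts bs : ℕ → ℝ} {γ : ℝ} {z : ℂ} {a b₂ : ℝ} {f g : ℝ → ℂ}

lemma wron_const (hγ : 0 < γ) (ht : StrictMono ts)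
    (hgap : ∀ n, γ ≤ ts (n + 1) - ts n) (hbs : ∀ n, 1 < bs n) (hab : a < b₂)
    (hf : IsInterfaceSolution ts bs z (Icc a b₂) f)
    (hg : IsInterfaceSolution ts bs z (Icc a b₂) g)
    {x y : ℝ} (hx : x ∈ offAtoms ts (Icc a b₂)) (hy : y ∈ offAtoms ts (Icc a b₂))
    (hxy : x ≤ y) :
    wron (offAtoms ts (Icc a b₂)) f g y = wron (offAtoms ts (Icc a b₂)) f g x := by
  set S := offAtoms ts (Icc a b₂) with hS
  have hud : UniqueDiffOn ℝ S := uniqueDiffOn_S hγ hgap hab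
  have hcont : ContinuousOn (wron S f g) S := by
    have h1 := sol_deriv_contOn hud hf
    have h2 := sol_contOn hg
    have h3 := sol_contOn hf
    have h4 := sol_deriv_contOn hud hg
    exact (h1.mul h2).sub (h3.mul h4)
  have main : ∀ e : ℂ →L[ℝ] ℝ, (e (wron S f g y) ≤ e (wron S f g x)) := by
    intro e
    apply gen_antitone hγ ht hgap (g := fun r => e (wron S f g r)) ?_ ?_ ?_ hx hy hxy
    · exact e.continuous.comp_continuousOn hcont
    · intro s hs
      have hnhds : S ∈ 𝓝 s := S_mem_nhds hγ hgap hs.1 hs.2.1 hs.2.2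
      have hw := wron_hasDerivAt hud hf hg hs.1 hnhds
      refine ⟨e 0, e.hasFDerivAt.comp_hasDerivAt s hw, by simp⟩
    · intro n hn
      obtain ⟨L, hL1, hL2⟩ := wron_jump hbs hf hg hn
      exact ⟨e L, (e.continuous.tendsto _).comp hL1, (e.continuous.tendsto _).comp hL2⟩
  have hre := main Complex.reCLM
  have hre' := main (-Complex.reCLM)
  have him := main Complex.imCLM
  have him' := main (-Complex.imCLM)
  simp only [ContinuousLinearMap.neg_apply, neg_le_neg_iff, Complex.reCLM_apply,
    Complex.imCLM_apply] at hre hre' him him'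
  exact Complex.ext (le_antisymm hre hre') (le_antisymm him him')
end Const

lemma pluecker (N N' D D' : ℂ) :
    (N' * (starRingEnd ℂ) N - N * (starRingEnd ℂ) N')
        * (D' * (starRingEnd ℂ) D - D * (starRingEnd ℂ) D')
      + (N' * (starRingEnd ℂ) D - N * (starRingEnd ℂ) D')
        * (starRingEnd ℂ) (N' * (starRingEnd ℂ) D - N * (starRingEnd ℂ) D')
    = (N' * D - N * D') * (starRingEnd ℂ) (N' * D - N * D') := by
  simp only [map_sub, map_mul, Complex.conj_conj]
  ring

lemma disc_identity (A c q m : ℂ) (hre : q.re = 0) (hq : q ≠ 0)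
    (hP : A * q + c * (starRingEnd ℂ) c = 1) :
    A - (starRingEnd ℂ) m * c + m * (starRingEnd ℂ) c + (m * (starRingEnd ℂ) m) * q
      = q * ((Complex.normSq (m - c/q) - 1/Complex.normSq q : ℝ) : ℂ) := by
  have hcq : (starRingEnd ℂ) q = -q := by
    apply Complex.ext <;> simp [hre]
  have h1 : ((Complex.normSq (m - c/q) : ℝ) : ℂ) = (m - c/q) * ((starRingEnd ℂ) m + (starRingEnd ℂ) c / q) := by
    rw [← Complex.mul_conj]
    congr 1
    rw [map_sub, map_div₀, hcq]
    ring
  have h2 : ((Complex.normSq q : ℝ) : ℂ) = -q^2 := by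
    rw [← Complex.mul_conj, hcq]; ring
  push_cast
  rw [h1, h2]
  field_simp
  ring_nf
  linear_combination hP

lemma abs_of_re_zero {q : ℂ} (hre : q.re = 0) : ‖q‖ = |q.im| := by
  rw [Complex.norm_def, Complex.normSq_apply, hre]
  rw [show (0:ℝ) * 0 + q.im * q.im = q.im ^ 2 by ring]
  exact Real.sqrt_sq_eq_abs _


/-- nesting of Weyl discs: for `Im z > 0` and `a < b₁ ≤ b₂`, the closed
Weyl disc at `b₂` is contained in the closed Weyl disc at `b₁`; in particular
`r(z, b₂) ≤ r(z, b₁)`. -/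
theorem weyl_disc_nesting
    (ts bs : ℕ → ℝ) (γ : ℝ) (hγ : 0 < γ)
    (ht_mono : StrictMono ts) (hgap : ∀ n, γ ≤ ts (n + 1) - ts n)
    (hbs : ∀ n, 1 < bs n)
    (z : ℂ) (hz : 0 < z.im) (a b₁ b₂ : ℝ) (hab : a < b₁) (hb12 : b₁ ≤ b₂)
    (ha : a ∉ Set.range ts) (hb₁ : b₁ ∉ Set.range ts) (hb₂ : b₂ ∉ Set.range ts)
    (uN uD : ℝ → ℂ)
    (huN : IsInterfaceSolution ts bs z (Icc a b₂) uN)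
    (huD : IsInterfaceSolution ts bs z (Icc a b₂) uD)
    (hNa : uN a = 1) (hNa' : derivWithin uN (offAtoms ts (Icc a b₂)) a = 0)
    (hDa : uD a = 0) (hDa' : derivWithin uD (offAtoms ts (Icc a b₂)) a = 1) :
    {m : ℂ | norm (m - wronConj (offAtoms ts (Icc a b₂)) uN uD b₂
          / wronConj (offAtoms ts (Icc a b₂)) uD uD b₂)
        ≤ 1 / norm (wronConj (offAtoms ts (Icc a b₂)) uD uD b₂)}
      ⊆ {m : ℂ | norm (m - wronConj (offAtoms ts (Icc a b₂)) uN uD b₁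
          / wronConj (offAtoms ts (Icc a b₂)) uD uD b₁)
        ≤ 1 / norm (wronConj (offAtoms ts (Icc a b₂)) uD uD b₁)} ∧
    1 / norm (wronConj (offAtoms ts (Icc a b₂)) uD uD b₂)
      ≤ 1 / norm (wronConj (offAtoms ts (Icc a b₂)) uD uD b₁) := by
  set S := offAtoms ts (Icc a b₂) with hSdef
  have hab2 : a < b₂ := lt_of_lt_of_le hab hb12
  have hud : UniqueDiffOn ℝ S := uniqueDiffOn_S hγ hgap hab2
  have haS : a ∈ S := ⟨⟨le_refl a, le_of_lt hab2⟩, ha⟩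
  have hb1S : b₁ ∈ S := ⟨⟨le_of_lt hab, hb12⟩, hb₁⟩
  have hb2S : b₂ ∈ S := ⟨⟨le_of_lt hab2, le_refl b₂⟩, hb₂⟩
  -- constancy of the plain Wronskian
  have hwron : ∀ b ∈ S, a ≤ b → wron S uN uD b = -1 := by
    intro b hb hab'
    rw [wron_const hγ ht_mono hgap hbs hab2 huN huD haS hb hab']
    simp [wron, hNa, hNa', hDa, hDa']
    exact hDa'
  -- q is purely imaginary
  have hqre : ∀ b : ℝ, (wronConj S uD uD b).re = 0 := by
    intro b
    simp only [wronConj, Complex.sub_re, Complex.mul_re, Complex.conj_re, Complex.conj_im]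
    ring
  -- Pluecker relation
  have hP : ∀ b ∈ S, a ≤ b →
      wronConj S uN uN b * wronConj S uD uD b
        + wronConj S uN uD b * (starRingEnd ℂ) (wronConj S uN uD b) = 1 := by
    intro b hb hab'
    have := pluecker (uN b) (derivWithin uN S b) (uD b) (derivWithin uD S b)
    have heq : (derivWithin uN S b * uD b - uN b * derivWithin uD S b) = wron S uN uD b := rfl
    rw [heq, hwron b hb hab'] at this
    simp only [wronConj]
    rw [this]
    simp
  -- monotonicity of Im q
  have himq : ∀ x ∈ S, ∀ y ∈ S, x ≤ y →
      (wronConj S uD uD y).im ≤ (wronConj S uD uD x).im := by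
    intro x hx y hy hxy
    have := imPhi_antitone hγ ht_mono hgap hbs hz hab2 huD huD 0 hx hy hxy
    simpa [phiComb] using this
  have hqa : wronConj S uD uD a = 0 := by
    simp [wronConj, hDa, hDa']
  -- strict negativity at b₁
  have himqb1 : (wronConj S uD uD b₁).im < 0 := by
    by_contra hcon
    push_neg at hcon
    have hq0 : ∀ s ∈ S, a ≤ s → s ≤ b₁ → (wronConj S uD uD s).im = 0 := by
      intro s hsS h1 h2
      have hup : (wronConj S uD uD s).im ≤ 0 := by
        have := himq a haS s hsS h1
        rwa [hqa, Complex.zero_im] at this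
      have hdown : 0 ≤ (wronConj S uD uD s).im :=
        le_trans hcon (himq s hsS b₁ hb1S h2)
      linarith
    obtain ⟨ε, hεpos, hε⟩ := exists_ball_no_atoms hγ hgap ha
    set s₀ := min b₁ (a + ε/2) with hs₀def
    have hs₀a : a < s₀ := lt_min hab (by linarith)
    have hs₀b₁ : s₀ ≤ b₁ := min_le_left _ _
    have hIccS : Icc a s₀ ⊆ S := by
      rintro t ⟨h1, h2⟩
      refine ⟨⟨h1, le_trans h2 (le_trans hs₀b₁ hb12)⟩, ?_⟩
      rintro ⟨k, rfl⟩
      refine hε k ⟨by linarith, ?_⟩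
      have := le_trans h2 (min_le_right _ _)
      linarith
    have hD0 : ∀ s ∈ Ioo a s₀, uD s = 0 := by
      intro s hs
      have hsS : s ∈ S := hIccS ⟨le_of_lt hs.1, le_of_lt hs.2⟩
      have hsb₂ : s < b₂ := lt_of_lt_of_le hs.2 (le_trans hs₀b₁ hb12)
      have hnhds := S_mem_nhds hγ hgap hsS hs.1 hsb₂
      have hq' := wronConj_hasDerivAt hud huD huD hsS hnhds
      have hqim : HasDerivAt (fun r => (wronConj S uD uD r).im)
          ((((starRingEnd ℂ) z - z) * (uD s * (starRingEnd ℂ) (uD s))).im) s :=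
        Complex.imCLM.hasFDerivAt.comp_hasDerivAt s hq'
      have hev : (fun r => (wronConj S uD uD r).im) =ᶠ[𝓝 s] fun _ => (0:ℝ) := by
        filter_upwards [Ioo_mem_nhds hs.1 hs.2] with r hr
        exact hq0 r (hIccS (Ioo_subset_Icc_self hr)) (le_of_lt hr.1)
          (le_trans (le_of_lt hr.2) hs₀b₁)
      have hconst : HasDerivAt (fun r => (wronConj S uD uD r).im) 0 s :=
        (hasDerivAt_const s (0:ℝ)).congr_of_eventuallyEq hev
      have huniq := hqim.unique hconst
      rw [Complex.mul_conj] at huniq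
      simp only [Complex.mul_im, Complex.sub_im, Complex.sub_re, Complex.conj_re,
        Complex.conj_im, Complex.ofReal_im, Complex.ofReal_re] at huniq
      have hnsq : Complex.normSq (uD s) = 0 := by nlinarith [Complex.normSq_nonneg (uD s), hz]
      exact Complex.normSq_eq_zero.mp hnsq
    have hev : uD =ᶠ[𝓝[S] a] fun _ => (0:ℂ) := by
      have hmem : Ioo (a - 1) s₀ ∈ 𝓝 a := Ioo_mem_nhds (by linarith) hs₀a
      filter_upwards [nhdsWithin_le_nhds hmem, self_mem_nhdsWithin] with r hr hrS
      rcases eq_or_lt_of_le hrS.1.1 with heq | hra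
      · rw [← heq]; exact hDa
      · exact hD0 r ⟨hra, hr.2⟩
    have hder : derivWithin uD S a = derivWithin (fun _ => (0:ℂ)) S a :=
      hev.derivWithin_eq hDa
    rw [hDa', derivWithin_fun_const] at hder
    exact one_ne_zero hder
  have himqb2 : (wronConj S uD uD b₂).im < 0 :=
    lt_of_le_of_lt (himq b₁ hb1S b₂ hb2S hb12) himqb1
  have hq1ne : wronConj S uD uD b₁ ≠ 0 := fun h => by
    rw [h] at himqb1; simp at himqb1
  have hq2ne : wronConj S uD uD b₂ ≠ 0 := fun h => by
    rw [h] at himqb2; simp at himqb2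
  have habs1 : ‖wronConj S uD uD b₁‖ = -(wronConj S uD uD b₁).im := by
    rw [abs_of_re_zero (hqre b₁), abs_of_neg himqb1]
  have habs2 : ‖wronConj S uD uD b₂‖ = -(wronConj S uD uD b₂).im := by
    rw [abs_of_re_zero (hqre b₂), abs_of_neg himqb2]
  have hrad : 1 / ‖wronConj S uD uD b₂‖ ≤ 1 / ‖wronConj S uD uD b₁‖ := by
    rw [habs1, habs2]
    apply one_div_le_one_div_of_le (by linarith)
    linarith [himq b₁ hb1S b₂ hb2S hb12]
  refine ⟨?_, hrad⟩
  intro m hm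
  simp only [Set.mem_setOf_eq] at hm ⊢
  -- identities at b₁ and b₂
  have hid : ∀ b ∈ S, a ≤ b → (wronConj S uD uD b) ≠ 0 →
      phiComb S uN uD m b = wronConj S uD uD b *
        ((Complex.normSq (m - wronConj S uN uD b / wronConj S uD uD b)
          - 1 / Complex.normSq (wronConj S uD uD b) : ℝ) : ℂ) := by
    intro b hb hab' hne
    exact disc_identity _ _ _ m (hqre b) hne (hP b hb hab')
  have hid1 := hid b₁ hb1S (le_of_lt hab) hq1ne
  have hid2 := hid b₂ hb2S (le_of_lt hab2) hq2ne
  set R₂ : ℝ := Complex.normSq (m - wronConj S uN uD b₂ / wronConj S uD uD b₂)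
      - 1 / Complex.normSq (wronConj S uD uD b₂) with hR₂
  set R₁ : ℝ := Complex.normSq (m - wronConj S uN uD b₁ / wronConj S uD uD b₁)
      - 1 / Complex.normSq (wronConj S uD uD b₁) with hR₁
  have hR₂le : R₂ ≤ 0 := by
    have h1 : ‖m - wronConj S uN uD b₂ / wronConj S uD uD b₂‖ ^ 2
        ≤ (1 / ‖wronConj S uD uD b₂‖) ^ 2 :=
      pow_le_pow_left₀ (norm_nonneg _) hm 2
    rw [Complex.sq_norm] at h1
    have h2 : (1 / ‖wronConj S uD uD b₂‖) ^ 2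
        = 1 / Complex.normSq (wronConj S uD uD b₂) := by
      rw [div_pow, one_pow, Complex.sq_norm]
    rw [h2] at h1
    simp only [hR₂]
    linarith
  have hPhi2 : 0 ≤ (phiComb S uN uD m b₂).im := by
    rw [hid2]
    simp only [Complex.mul_im, Complex.ofReal_re, Complex.ofReal_im, mul_zero, zero_add]
    nlinarith
  have hPhi1 : 0 ≤ (phiComb S uN uD m b₁).im :=
    le_trans hPhi2 (imPhi_antitone hγ ht_mono hgap hbs hz hab2 huN huD m hb1S hb2S hb12)
  have hR₁le : R₁ ≤ 0 := by
    rw [hid1] at hPhi1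
    simp only [Complex.mul_im, Complex.ofReal_re, Complex.ofReal_im, mul_zero, zero_add] at hPhi1
    nlinarith
  -- conclude
  have h1 : ‖m - wronConj S uN uD b₁ / wronConj S uD uD b₁‖ ^ 2
      ≤ (1 / ‖wronConj S uD uD b₁‖) ^ 2 := by
    rw [Complex.sq_norm, div_pow, one_pow, Complex.sq_norm]
    simp only [hR₁] at hR₁le
    linarith
  have h2 := Real.sqrt_le_sqrt h1
  rwa [Real.sqrt_sq (norm_nonneg _), Real.sqrt_sq (by positivity)] at h2
end
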